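/- Let 0 < γ < 1. There exists n₀ such that for all n ≥ n₀ the following holds. Let G be an edge-coloured graph on n vertices such that |L(x)| ≥ γn⁴ for every vertex x and |L(x₁,x₂;y₁,y₂)| ≥ γn⁴ for all distinct vertices x₁,x₂,y₁,y₂ with x₁x₂, y₁y₂ ∈ E(G). Then there exists a family F' of pairwise vertex-disjoint properly coloured paths of length 3 with |F'| ≤ 2⁻⁶γn, |L(x) ∩ F'| ≥ 2⁻⁹γ²n for every vertex x, and |L(x₁,x₂;y₁,y₂) ∩ F'| ≥ 2⁻⁹γ²n for all such quadruples. -/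

import Mathlib

open SimpleGraph

/-- A list of vertices forms a properly coloured walk: consecutive vertices are
adjacent and consecutive edges receive different colours. -/
def IsPCWalk {V : Type*} (G : SimpleGraph V) (c : V → V → ℕ) : List V → Prop
  | a :: b :: d :: rest => G.Adj a b ∧ c a b ≠ c b d ∧ IsPCWalk G c (b :: d :: rest)
  | [a, b] => G.Adj a b
  | _ => True

/-- A properly coloured path: distinct vertices forming a properly coloured walk. -/
def IsPCPath {V : Type*} (G : SimpleGraph V) (c : V → V → ℕ) (l : List V) : Prop :=
  l.Nodup ∧ IsPCWalk G c l

/-- A properly coloured cycle, given as a list of (distinct) vertices of length ≥ 3;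
closing the cycle by appending the first two vertices ensures all adjacencies and
colour conditions, including around the wrap-around vertex. -/
def IsPCCycle {V : Type*} (G : SimpleGraph V) (c : V → V → ℕ) (l : List V) : Prop :=
  3 ≤ l.length ∧ l.Nodup ∧ IsPCWalk G c (l ++ l.take 2)

/-- The colour degree of `v`: the number of distinct colours on edges at `v`. -/
noncomputable def colourDeg {V : Type*} (G : SimpleGraph V) (c : V → V → ℕ) (v : V) : ℕ :=
  ((c v) '' {w | G.Adj v w}).ncard

/-- `colourDeg1 G c v a`: the number of edges at `v` whose colour differs from `a`.
`δ₁^c(G) ≥ k` is then `∀ v a, k ≤ colourDeg1 G c v a`. -/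
noncomputable def colourDeg1 {V : Type*} (G : SimpleGraph V) (c : V → V → ℕ) (v : V) (a : ℕ) : ℕ :=
  {w | G.Adj v w ∧ c v w ≠ a}.ncard

/-- The set of absorbing paths for the vertex `x`: properly coloured paths `z₁z₂z₃z₄`
avoiding `x` such that `z₁z₂xz₃z₄` is also properly coloured. -/
def Labs {V : Type*} (G : SimpleGraph V) (c : V → V → ℕ) (x : V) : Set (V × V × V × V) :=
  {p | p.1 ≠ x ∧ p.2.1 ≠ x ∧ p.2.2.1 ≠ x ∧ p.2.2.2 ≠ x ∧
    IsPCPath G c [p.1, p.2.1, p.2.2.1, p.2.2.2] ∧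
    IsPCPath G c [p.1, p.2.1, x, p.2.2.1, p.2.2.2]}

/-- The set of absorbing paths for the ordered pair of edges `(x₁,x₂; y₁,y₂)`. -/
def LabsE {V : Type*} (G : SimpleGraph V) (c : V → V → ℕ) (x₁ x₂ y₁ y₂ : V) :
    Set (V × V × V × V) :=
  {p | (∀ v ∈ [p.1, p.2.1, p.2.2.1, p.2.2.2], v ≠ x₁ ∧ v ≠ x₂ ∧ v ≠ y₁ ∧ v ≠ y₂) ∧
    IsPCPath G c [p.1, p.2.1, p.2.2.1, p.2.2.2] ∧
    IsPCPath G c [p.1, p.2.1, x₁, x₂] ∧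
    IsPCPath G c [y₁, y₂, p.2.2.1, p.2.2.2]}

set_option linter.unusedSectionVars false

namespace Stmt17

open Finset

attribute [local instance] Classical.propDecidable

variable {V : Type} [Fintype V]

def tup (p : V × V × V × V) : List V := [p.1, p.2.1, p.2.2.1, p.2.2.2]

lemma mem_tup_iff {v : V} {p : V × V × V × V} :
    v ∈ tup p ↔ v = p.1 ∨ v = p.2.1 ∨ v = p.2.2.1 ∨ v = p.2.2.2 := by
  simp [tup]

lemma card_proj1 (v : V) :
    (Finset.univ.filter fun q : V × V × V × V => v = q.1).card ≤ Fintype.card V ^ 3 := by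
  have h := Finset.card_le_card_of_injOn (fun q : V × V × V × V => q.2)
    (t := (Finset.univ : Finset (V × V × V)))
    (s := Finset.univ.filter fun q : V × V × V × V => v = q.1)
    (fun a _ => Finset.mem_univ _) ?_
  · simpa [Fintype.card_prod, pow_succ, mul_assoc] using h
  · intro a ha b hb hab
    simp only [Finset.coe_filter, Set.mem_setOf_eq, Finset.mem_univ, true_and] at ha hb
    obtain ⟨a1, a2⟩ := a; obtain ⟨b1, b2⟩ := b
    simp_all

lemma card_proj2 (v : V) :
    (Finset.univ.filter fun q : V × V × V × V => v = q.2.1).card ≤ Fintype.card V ^ 3 := by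
  have h := Finset.card_le_card_of_injOn (fun q : V × V × V × V => (q.1, q.2.2))
    (t := (Finset.univ : Finset (V × V × V)))
    (s := Finset.univ.filter fun q : V × V × V × V => v = q.2.1)
    (fun a _ => Finset.mem_univ _) ?_
  · simpa [Fintype.card_prod, pow_succ, mul_assoc] using h
  · intro a ha b hb hab
    simp only [Finset.coe_filter, Set.mem_setOf_eq, Finset.mem_univ, true_and] at ha hb
    obtain ⟨a1, a2, a3⟩ := a; obtain ⟨b1, b2, b3⟩ := b
    simp_all [Prod.ext_iff]

lemma card_proj3 (v : V) :
    (Finset.univ.filter fun q : V × V × V × V => v = q.2.2.1).card ≤ Fintype.card V ^ 3 := by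
  have h := Finset.card_le_card_of_injOn (fun q : V × V × V × V => (q.1, q.2.1, q.2.2.2))
    (t := (Finset.univ : Finset (V × V × V)))
    (s := Finset.univ.filter fun q : V × V × V × V => v = q.2.2.1)
    (fun a _ => Finset.mem_univ _) ?_
  · simpa [Fintype.card_prod, pow_succ, mul_assoc] using h
  · intro a ha b hb hab
    simp only [Finset.coe_filter, Set.mem_setOf_eq, Finset.mem_univ, true_and] at ha hb
    obtain ⟨a1, a2, a3, a4⟩ := a; obtain ⟨b1, b2, b3, b4⟩ := b
    simp_all [Prod.ext_iff]

lemma card_proj4 (v : V) :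
    (Finset.univ.filter fun q : V × V × V × V => v = q.2.2.2).card ≤ Fintype.card V ^ 3 := by
  have h := Finset.card_le_card_of_injOn (fun q : V × V × V × V => (q.1, q.2.1, q.2.2.1))
    (t := (Finset.univ : Finset (V × V × V)))
    (s := Finset.univ.filter fun q : V × V × V × V => v = q.2.2.2)
    (fun a _ => Finset.mem_univ _) ?_
  · simpa [Fintype.card_prod, pow_succ, mul_assoc] using h
  · intro a ha b hb hab
    simp only [Finset.coe_filter, Set.mem_setOf_eq, Finset.mem_univ, true_and] at ha hb
    obtain ⟨a1, a2, a3, a4⟩ := a; obtain ⟨b1, b2, b3, b4⟩ := b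
    simp_all [Prod.ext_iff]

lemma card_meets (v : V) :
    (Finset.univ.filter fun q : V × V × V × V => v ∈ tup q).card ≤ 4 * Fintype.card V ^ 3 := by
  have hsub : (Finset.univ.filter fun q : V × V × V × V => v ∈ tup q) ⊆
      ((Finset.univ.filter fun q : V × V × V × V => v = q.1) ∪
        (Finset.univ.filter fun q : V × V × V × V => v = q.2.1)) ∪
      ((Finset.univ.filter fun q : V × V × V × V => v = q.2.2.1) ∪
        (Finset.univ.filter fun q : V × V × V × V => v = q.2.2.2)) := by
    intro q hq
    simp only [Finset.mem_filter, Finset.mem_univ, true_and, Finset.mem_union, mem_tup_iff] at *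
    tauto
  calc (Finset.univ.filter fun q : V × V × V × V => v ∈ tup q).card
      ≤ _ := Finset.card_le_card hsub
    _ ≤ _ + _ := Finset.card_union_le _ _
    _ ≤ 4 * Fintype.card V ^ 3 := by
        have h1 := Finset.card_union_le (Finset.univ.filter fun q : V × V × V × V => v = q.1)
          (Finset.univ.filter fun q : V × V × V × V => v = q.2.1)
        have h2 := Finset.card_union_le (Finset.univ.filter fun q : V × V × V × V => v = q.2.2.1)
          (Finset.univ.filter fun q : V × V × V × V => v = q.2.2.2)
        have := card_proj1 v; have := card_proj2 v; have := card_proj3 v; have := card_proj4 v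
        omega

noncomputable def cnt (F : Finset (V × V × V × V)) (S : Set (V × V × V × V)) : ℕ :=
  (F.filter (fun q => q ∈ S)).card

lemma cnt_mono {F F' : Finset (V × V × V × V)} (h : F ⊆ F') (S : Set (V × V × V × V)) :
    cnt F S ≤ cnt F' S :=
  Finset.card_le_card (Finset.filter_subset_filter _ h)

lemma cnt_insert {F : Finset (V × V × V × V)} {q : V × V × V × V} (hq : q ∉ F)
    {S : Set (V × V × V × V)} (hqS : q ∈ S) : cnt (insert q F) S = cnt F S + 1 := by
  unfold cnt
  rw [Finset.filter_insert, if_pos hqS,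
    Finset.card_insert_of_notMem (fun h => hq (Finset.mem_of_mem_filter _ h))]

lemma cnt_eq_ncard (F : Finset (V × V × V × V)) (S : Set (V × V × V × V)) :
    ((F : Set (V × V × V × V)) ∩ S).ncard = cnt F S := by
  have h : (F : Set (V × V × V × V)) ∩ S = ↑(F.filter (fun q => q ∈ S)) := by
    ext q; simp
  rw [h, Set.ncard_coe_finset]; rfl

lemma ncard_eq_filter_card (S : Set (V × V × V × V)) :
    S.ncard = (Finset.univ.filter (fun q => q ∈ S)).card := by
  have h : S = ↑(Finset.univ.filter (fun q => q ∈ S)) := by ext q; simp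
  conv_lhs => rw [h]
  rw [Set.ncard_coe_finset]

noncomputable def stepf (G : SimpleGraph V) (c : V → V → ℕ) (F : Finset (V × V × V × V))
    (q : V × V × V × V) : Finset (V × V × V × V) :=
  if (∀ p ∈ F, ∀ v ∈ tup q, v ∉ tup p) ∧ IsPCPath G c (tup q) then insert q F else F

lemma subset_stepf (G : SimpleGraph V) (c : V → V → ℕ) (F : Finset (V × V × V × V))
    (q : V × V × V × V) : F ⊆ stepf G c F q := by
  unfold stepf; split
  · exact Finset.subset_insert _ _
  · exact Finset.Subset.refl _

lemma stepf_sum_le (G : SimpleGraph V) (c : V → V → ℕ) (γ : ℝ) (hγ0 : 0 < γ)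
    (F : Finset (V × V × V × V))
    (hF : 16 * (F.card : ℝ) * (Fintype.card V : ℝ) ^ 3 ≤ γ * (Fintype.card V : ℝ) ^ 4 / 4)
    (S : Set (V × V × V × V))
    (hS : γ * (Fintype.card V : ℝ) ^ 4 ≤ S.ncard)
    (hSpc : ∀ r ∈ S, IsPCPath G c (tup r)) :
    ∑ q : V × V × V × V, Real.exp (-(cnt (stepf G c F q) S : ℝ)) ≤
      (1 - 3 * γ / 4 * (1 - Real.exp (-1))) * (Fintype.card V : ℝ) ^ 4 *
        Real.exp (-(cnt F S : ℝ)) := by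
  set n := Fintype.card V with hn
  set m := cnt F S with hm
  set Gd := Finset.univ.filter
    (fun q : V × V × V × V => q ∈ S ∧ ∀ p ∈ F, ∀ v ∈ tup q, v ∉ tup p) with hGdd
  set Rr := Finset.univ.filter
    (fun q : V × V × V × V => ¬(q ∈ S ∧ ∀ p ∈ F, ∀ v ∈ tup q, v ∉ tup p)) with hRrd
  set B := Finset.univ.filter (fun q : V × V × V × V => ¬ ∀ p ∈ F, ∀ v ∈ tup q, v ∉ tup p)
    with hBd
  -- bounding the bad set
  have hBsub : B ⊆ F.biUnion (fun p => (tup p).toFinset.biUnion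
      (fun v => Finset.univ.filter (fun q => v ∈ tup q))) := by
    intro q hq
    simp only [hBd, Finset.mem_filter, Finset.mem_univ, true_and] at hq
    push_neg at hq
    obtain ⟨p, hp, v, hv, hvp⟩ := hq
    simp only [Finset.mem_biUnion, List.mem_toFinset, Finset.mem_filter, Finset.mem_univ,
      true_and]
    exact ⟨p, hp, v, hvp, hv⟩
  have hinner : ∀ p : V × V × V × V,
      ((tup p).toFinset.biUnion (fun v => Finset.univ.filter (fun q => v ∈ tup q))).card ≤
        4 * (4 * n ^ 3) := by
    intro p
    refine le_trans Finset.card_biUnion_le ?_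
    refine le_trans (Finset.sum_le_sum (fun v _ => card_meets v)) ?_
    rw [Finset.sum_const, smul_eq_mul]
    have h4 : (tup p).toFinset.card ≤ 4 := le_trans (List.toFinset_card_le _) (by rfl)
    exact Nat.mul_le_mul_right _ h4
  have hBcard : B.card ≤ F.card * (4 * (4 * n ^ 3)) := by
    refine le_trans (Finset.card_le_card hBsub) (le_trans Finset.card_biUnion_le ?_)
    calc ∑ p ∈ F, ((tup p).toFinset.biUnion
          (fun v => Finset.univ.filter (fun q => v ∈ tup q))).card
        ≤ ∑ _p ∈ F, 4 * (4 * n ^ 3) := Finset.sum_le_sum (fun p _ => hinner p)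
      _ = F.card * (4 * (4 * n ^ 3)) := by rw [Finset.sum_const, smul_eq_mul]
  -- density of the good set
  have hScard : (S.ncard : ℝ) ≤ (Gd.card : ℝ) + (B.card : ℝ) := by
    rw [ncard_eq_filter_card S]
    have h1 : (Finset.univ.filter (fun q : V × V × V × V => q ∈ S)).card ≤
        ((Finset.univ.filter (fun q : V × V × V × V => q ∈ S)) \ B).card + B.card :=
      Finset.card_le_card_sdiff_add_card
    have h2 : (Finset.univ.filter (fun q : V × V × V × V => q ∈ S)) \ B ⊆ Gd := by
      intro q hq
      rw [Finset.mem_sdiff] at hq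
      obtain ⟨hq1, hq2⟩ := hq
      simp only [Finset.mem_filter, Finset.mem_univ, true_and] at hq1
      simp only [hBd, Finset.mem_filter, Finset.mem_univ, true_and, not_not] at hq2
      simp only [hGdd, Finset.mem_filter, Finset.mem_univ, true_and]
      exact ⟨hq1, hq2⟩
    have h3 := Finset.card_le_card h2
    have h4 := le_trans h1 (Nat.add_le_add_right h3 _)
    exact_mod_cast h4
  have hGdcard : 3 * γ / 4 * (n : ℝ) ^ 4 ≤ (Gd.card : ℝ) := by
    have hB' : (B.card : ℝ) ≤ 16 * (F.card : ℝ) * (n : ℝ) ^ 3 := by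
      have h5 : (B.card : ℝ) ≤ (F.card : ℝ) * (4 * (4 * (n : ℝ) ^ 3)) := by exact_mod_cast hBcard
      nlinarith [h5]
    nlinarith [hS, hScard, hB', hF]
  -- counting on the good set
  have hgood : ∀ q ∈ Gd, cnt (stepf G c F q) S = m + 1 := by
    intro q hq
    rw [hGdd, Finset.mem_filter] at hq
    obtain ⟨-, hqS, hdisj⟩ := hq
    have hqF : q ∉ F := by
      intro h
      exact hdisj q h q.1 (by simp [tup]) (by simp [tup])
    unfold stepf
    rw [if_pos ⟨hdisj, hSpc q hqS⟩]
    exact cnt_insert hqF hqS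
  have hrest : ∀ q : V × V × V × V,
      Real.exp (-(cnt (stepf G c F q) S : ℝ)) ≤ Real.exp (-(m : ℝ)) := by
    intro q
    have h6 := cnt_mono (subset_stepf G c F q) S
    exact Real.exp_le_exp.mpr (by exact_mod_cast neg_le_neg (Nat.cast_le.mpr h6))
  -- split the sum
  have hsplit : ∑ q : V × V × V × V, Real.exp (-(cnt (stepf G c F q) S : ℝ)) =
      (∑ q ∈ Gd, Real.exp (-(cnt (stepf G c F q) S : ℝ))) +
      ∑ q ∈ Rr, Real.exp (-(cnt (stepf G c F q) S : ℝ)) := by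
    rw [hGdd, hRrd]
    exact (Finset.sum_filter_add_sum_filter_not _ _ _).symm
  have hsum1 : (∑ q ∈ Gd, Real.exp (-(cnt (stepf G c F q) S : ℝ))) =
      (Gd.card : ℝ) * (Real.exp (-1) * Real.exp (-(m : ℝ))) := by
    have hpt : ∀ q ∈ Gd, Real.exp (-(cnt (stepf G c F q) S : ℝ)) =
        Real.exp (-1) * Real.exp (-(m : ℝ)) := by
      intro q hq
      rw [hgood q hq]
      push_cast
      rw [← Real.exp_add]
      congr 1
      ring
    rw [Finset.sum_congr rfl hpt, Finset.sum_const, nsmul_eq_mul]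
  have hsum2 : (∑ q ∈ Rr, Real.exp (-(cnt (stepf G c F q) S : ℝ))) ≤
      (Rr.card : ℝ) * Real.exp (-(m : ℝ)) := by
    rw [← nsmul_eq_mul]
    exact Finset.sum_le_card_nsmul _ _ _ (fun q _ => hrest q)
  have hcards : (Gd.card : ℝ) + (Rr.card : ℝ) = (n : ℝ) ^ 4 := by
    have h := Finset.card_filter_add_card_filter_not
      (s := (Finset.univ : Finset (V × V × V × V)))
      (p := fun q : V × V × V × V => q ∈ S ∧ ∀ p ∈ F, ∀ v ∈ tup q, v ∉ tup p)
    have hcu : (Finset.univ : Finset (V × V × V × V)).card = n ^ 4 := by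
      rw [Finset.card_univ]
      simp only [Fintype.card_prod, hn]
      ring
    rw [hcu] at h
    rw [hGdd, hRrd]
    exact_mod_cast congrArg (Nat.cast : ℕ → ℝ) h
  rw [hsplit]
  have hE : (0 : ℝ) < Real.exp (-(m : ℝ)) := Real.exp_pos _
  have he1 : (0 : ℝ) < Real.exp (-1) := Real.exp_pos _
  have he2 : Real.exp (-1 : ℝ) ≤ 1 := by
    rw [show (1 : ℝ) = Real.exp 0 from (Real.exp_zero).symm]
    exact Real.exp_le_exp.mpr (by norm_num)
  have hkey : (Gd.card : ℝ) * (Real.exp (-1) * Real.exp (-(m : ℝ))) +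
      (Rr.card : ℝ) * Real.exp (-(m : ℝ)) ≤
      (1 - 3 * γ / 4 * (1 - Real.exp (-1))) * (n : ℝ) ^ 4 * Real.exp (-(m : ℝ)) := by
    nlinarith [mul_nonneg (mul_nonneg (by linarith : (0 : ℝ) ≤ (Gd.card : ℝ) -
      3 * γ / 4 * (n : ℝ) ^ 4) (by linarith : (0 : ℝ) ≤ 1 - Real.exp (-1))) hE.le]
  calc (∑ q ∈ Gd, Real.exp (-(cnt (stepf G c F q) S : ℝ))) +
      ∑ q ∈ Rr, Real.exp (-(cnt (stepf G c F q) S : ℝ))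
      ≤ (Gd.card : ℝ) * (Real.exp (-1) * Real.exp (-(m : ℝ))) +
        (Rr.card : ℝ) * Real.exp (-(m : ℝ)) := by rw [hsum1]; exact add_le_add_right hsum2 _
    _ ≤ _ := hkey

noncomputable def quadIdx (G : SimpleGraph V) : Finset (V × V × V × V) :=
  Finset.univ.filter (fun w => (tup w).Nodup ∧ G.Adj w.1 w.2.1 ∧ G.Adj w.2.2.1 w.2.2.2)

noncomputable def phi (G : SimpleGraph V) (c : V → V → ℕ) (F : Finset (V × V × V × V)) : ℝ :=
  (∑ x : V, Real.exp (-(cnt F (Labs G c x) : ℝ))) +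
  ∑ w ∈ quadIdx G, Real.exp (-(cnt F (LabsE G c w.1 w.2.1 w.2.2.1 w.2.2.2) : ℝ))

lemma labs_pc {G : SimpleGraph V} {c : V → V → ℕ} {x : V} {r : V × V × V × V}
    (h : r ∈ Labs G c x) : IsPCPath G c (tup r) := h.2.2.2.2.1

lemma labsE_pc {G : SimpleGraph V} {c : V → V → ℕ} {a b d e : V} {r : V × V × V × V}
    (h : r ∈ LabsE G c a b d e) : IsPCPath G c (tup r) := h.2.1

lemma phi_sum_le (G : SimpleGraph V) (c : V → V → ℕ) (γ : ℝ) (hγ0 : 0 < γ)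
    (hL : ∀ x : V, γ * (Fintype.card V : ℝ) ^ 4 ≤ ((Labs G c x).ncard : ℝ))
    (hLE : ∀ w ∈ quadIdx G,
      γ * (Fintype.card V : ℝ) ^ 4 ≤ ((LabsE G c w.1 w.2.1 w.2.2.1 w.2.2.2).ncard : ℝ))
    (F : Finset (V × V × V × V))
    (hF : 16 * (F.card : ℝ) * (Fintype.card V : ℝ) ^ 3 ≤ γ * (Fintype.card V : ℝ) ^ 4 / 4) :
    ∑ q : V × V × V × V, phi G c (stepf G c F q) ≤
      (Fintype.card V : ℝ) ^ 4 *
        ((1 - 3 * γ / 4 * (1 - Real.exp (-1))) * phi G c F) := by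
  unfold phi
  rw [Finset.sum_add_distrib]
  have h1 : ∑ q : V × V × V × V, ∑ x : V,
      Real.exp (-(cnt (stepf G c F q) (Labs G c x) : ℝ)) ≤
      ∑ x : V, (1 - 3 * γ / 4 * (1 - Real.exp (-1))) * (Fintype.card V : ℝ) ^ 4 *
        Real.exp (-(cnt F (Labs G c x) : ℝ)) := by
    rw [Finset.sum_comm]
    exact Finset.sum_le_sum (fun x _ =>
      stepf_sum_le G c γ hγ0 F hF _ (hL x) (fun r hr => labs_pc hr))
  have h2 : ∑ q : V × V × V × V, ∑ w ∈ quadIdx G,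
      Real.exp (-(cnt (stepf G c F q) (LabsE G c w.1 w.2.1 w.2.2.1 w.2.2.2) : ℝ)) ≤
      ∑ w ∈ quadIdx G, (1 - 3 * γ / 4 * (1 - Real.exp (-1))) * (Fintype.card V : ℝ) ^ 4 *
        Real.exp (-(cnt F (LabsE G c w.1 w.2.1 w.2.2.1 w.2.2.2) : ℝ)) := by
    rw [Finset.sum_comm]
    exact Finset.sum_le_sum (fun w hw =>
      stepf_sum_le G c γ hγ0 F hF _ (hLE w hw) (fun r hr => labsE_pc hr))
  refine le_trans (add_le_add h1 h2) ?_
  rw [show (∑ x : V, (1 - 3 * γ / 4 * (1 - Real.exp (-1))) * (Fintype.card V : ℝ) ^ 4 *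
        Real.exp (-(cnt F (Labs G c x) : ℝ))) =
      (1 - 3 * γ / 4 * (1 - Real.exp (-1))) * (Fintype.card V : ℝ) ^ 4 *
        ∑ x : V, Real.exp (-(cnt F (Labs G c x) : ℝ)) from (Finset.mul_sum _ _ _).symm]
  rw [show (∑ w ∈ quadIdx G, (1 - 3 * γ / 4 * (1 - Real.exp (-1))) * (Fintype.card V : ℝ) ^ 4 *
        Real.exp (-(cnt F (LabsE G c w.1 w.2.1 w.2.2.1 w.2.2.2) : ℝ))) =
      (1 - 3 * γ / 4 * (1 - Real.exp (-1))) * (Fintype.card V : ℝ) ^ 4 *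
        ∑ w ∈ quadIdx G, Real.exp (-(cnt F (LabsE G c w.1 w.2.1 w.2.2.1 w.2.2.2) : ℝ)) from
      (Finset.mul_sum _ _ _).symm]
  apply le_of_eq
  ring

lemma quadIdx_card_le (G : SimpleGraph V) :
    (quadIdx G).card ≤ Fintype.card V ^ 4 := by
  refine le_trans (Finset.card_filter_le _ _) (le_of_eq ?_)
  rw [Finset.card_univ]
  simp only [Fintype.card_prod]
  ring

lemma main_ind (G : SimpleGraph V) (c : V → V → ℕ) (γ : ℝ) (hγ0 : 0 < γ) (hγ1 : γ < 1)
    (hL : ∀ x : V, γ * (Fintype.card V : ℝ) ^ 4 ≤ ((Labs G c x).ncard : ℝ))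
    (hLE : ∀ w ∈ quadIdx G,
      γ * (Fintype.card V : ℝ) ^ 4 ≤ ((LabsE G c w.1 w.2.1 w.2.2.1 w.2.2.2).ncard : ℝ))
    (hcard1 : 1 ≤ Fintype.card V)
    (s : ℕ) (hs : (s : ℝ) ≤ γ * (Fintype.card V : ℝ) / 64) :
    ∀ t, t ≤ s → ∃ F : Finset (V × V × V × V),
      F.card ≤ t ∧
      (∀ p ∈ F, IsPCPath G c (tup p)) ∧
      (∀ p ∈ F, ∀ q ∈ F, p ≠ q → ∀ v ∈ tup p, v ∉ tup q) ∧
      phi G c F ≤ ((Fintype.card V : ℝ) + (Fintype.card V : ℝ) ^ 4) *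
        (1 - 3 * γ / 4 * (1 - Real.exp (-1))) ^ t := by
  have he2 : Real.exp (-1 : ℝ) ≤ 1 := by
    rw [show (1 : ℝ) = Real.exp 0 from (Real.exp_zero).symm]
    exact Real.exp_le_exp.mpr (by norm_num)
  have he1 : (0 : ℝ) < Real.exp (-1) := Real.exp_pos _
  have hc_nonneg : 0 ≤ 3 * γ / 4 * (1 - Real.exp (-1)) := by nlinarith
  have hc_le1 : 3 * γ / 4 * (1 - Real.exp (-1)) ≤ 1 := by nlinarith
  intro t
  induction t with
  | zero =>
    intro _
    refine ⟨∅, le_rfl, by simp, by simp, ?_⟩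
    unfold phi
    have hc0 : ∀ S : Set (V × V × V × V), cnt (∅ : Finset (V × V × V × V)) S = 0 := by
      intro S; unfold cnt; simp
    simp only [hc0, Nat.cast_zero, neg_zero, Real.exp_zero, pow_zero, mul_one]
    rw [Finset.sum_const, Finset.sum_const, Finset.card_univ, nsmul_eq_mul, nsmul_eq_mul,
      mul_one, mul_one]
    have hq4 := quadIdx_card_le G
    have hq4' : ((quadIdx G).card : ℝ) ≤ (Fintype.card V : ℝ) ^ 4 := by exact_mod_cast hq4
    linarith
  | succ t ih =>
    intro hts
    obtain ⟨F, hFc, hFpc, hFd, hFφ⟩ := ih (Nat.le_of_succ_le hts)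
    have hcast : (F.card : ℝ) ≤ γ * (Fintype.card V : ℝ) / 64 := by
      have h1 : (F.card : ℝ) ≤ (s : ℝ) := by
        exact_mod_cast le_trans hFc (Nat.le_of_succ_le hts)
      linarith
    have hF16 : 16 * (F.card : ℝ) * (Fintype.card V : ℝ) ^ 3 ≤
        γ * (Fintype.card V : ℝ) ^ 4 / 4 := by
      have hn0 : (0 : ℝ) ≤ (Fintype.card V : ℝ) := Nat.cast_nonneg _
      nlinarith [pow_nonneg hn0 3, pow_nonneg hn0 4]
    have hne : (Finset.univ : Finset (V × V × V × V)).Nonempty := by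
      have : Nonempty V := Fintype.card_pos_iff.mp hcard1
      exact Finset.univ_nonempty
    have hqex : ∃ q ∈ (Finset.univ : Finset (V × V × V × V)),
        phi G c (stepf G c F q) ≤
          (1 - 3 * γ / 4 * (1 - Real.exp (-1))) * phi G c F := by
      apply Finset.exists_le_of_sum_le hne
      have hsum := phi_sum_le G c γ hγ0 hL hLE F hF16
      rw [Finset.sum_const, Finset.card_univ, nsmul_eq_mul]
      have hcu : (Fintype.card (V × V × V × V) : ℝ) = (Fintype.card V : ℝ) ^ 4 := by
        simp only [Fintype.card_prod]
        push_cast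
        ring
      rw [hcu]
      exact hsum
    obtain ⟨q, -, hq⟩ := hqex
    by_cases hcnd : (∀ p ∈ F, ∀ v ∈ tup q, v ∉ tup p) ∧ IsPCPath G c (tup q)
    · have hstep : stepf G c F q = insert q F := by unfold stepf; rw [if_pos hcnd]
      refine ⟨insert q F, ?_, ?_, ?_, ?_⟩
      · exact le_trans (Finset.card_insert_le _ _) (Nat.succ_le_succ hFc)
      · intro p hp
        rcases Finset.mem_insert.mp hp with h | h
        · subst h; exact hcnd.2
        · exact hFpc p h
      · intro p hp r hr hne' v hv
        rcases Finset.mem_insert.mp hp with h | h <;>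
          rcases Finset.mem_insert.mp hr with h' | h'
        · exact absurd (h.trans h'.symm) hne'
        · subst h; exact hcnd.1 r h' v hv
        · subst h'; intro hvq; exact (hcnd.1 p h v hvq) hv
        · exact hFd p h r h' hne' v hv
      · rw [← hstep]
        calc phi G c (stepf G c F q) ≤
            (1 - 3 * γ / 4 * (1 - Real.exp (-1))) * phi G c F := hq
          _ ≤ (1 - 3 * γ / 4 * (1 - Real.exp (-1))) *
              (((Fintype.card V : ℝ) + (Fintype.card V : ℝ) ^ 4) *
                (1 - 3 * γ / 4 * (1 - Real.exp (-1))) ^ t) :=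
            mul_le_mul_of_nonneg_left hFφ (by linarith)
          _ = ((Fintype.card V : ℝ) + (Fintype.card V : ℝ) ^ 4) *
              (1 - 3 * γ / 4 * (1 - Real.exp (-1))) ^ (t + 1) := by
            rw [pow_succ]; ring
    · have hstep : stepf G c F q = F := by unfold stepf; rw [if_neg hcnd]
      refine ⟨F, le_trans hFc (Nat.le_succ _), hFpc, hFd, ?_⟩
      rw [← hstep]
      calc phi G c (stepf G c F q) ≤
          (1 - 3 * γ / 4 * (1 - Real.exp (-1))) * phi G c F := hq
        _ ≤ (1 - 3 * γ / 4 * (1 - Real.exp (-1))) *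
            (((Fintype.card V : ℝ) + (Fintype.card V : ℝ) ^ 4) *
              (1 - 3 * γ / 4 * (1 - Real.exp (-1))) ^ t) :=
          mul_le_mul_of_nonneg_left hFφ (by linarith)
        _ = ((Fintype.card V : ℝ) + (Fintype.card V : ℝ) ^ 4) *
            (1 - 3 * γ / 4 * (1 - Real.exp (-1))) ^ (t + 1) := by
          rw [pow_succ]; ring

end Stmt17

set_option maxHeartbeats 1000000 in
/-- If every absorbing family `L(x)` and `L(x₁,x₂;y₁,y₂)` has size at least
`γn⁴`, then there is a family `F'` of pairwise vertex-disjoint properly coloured paths of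
length 3 with `|F'| ≤ 2⁻⁶γn` hitting every `L(x)` and every `L(x₁,x₂;y₁,y₂)` in at least
`2⁻⁹γ²n` members. -/
theorem stmt17 (γ : ℝ) (hγ0 : 0 < γ) (hγ1 : γ < 1) :
    ∃ n₀ : ℕ, ∀ (V : Type) [Fintype V] (G : SimpleGraph V) (c : V → V → ℕ),
      (∀ u v, c u v = c v u) →
      n₀ ≤ Fintype.card V →
      (∀ x : V, γ * (Fintype.card V : ℝ) ^ 4 ≤ (Labs G c x).ncard) →
      (∀ x₁ x₂ y₁ y₂ : V, ([x₁, x₂, y₁, y₂] : List V).Nodup →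
        G.Adj x₁ x₂ → G.Adj y₁ y₂ →
        γ * (Fintype.card V : ℝ) ^ 4 ≤ (LabsE G c x₁ x₂ y₁ y₂).ncard) →
      ∃ F' : Finset (V × V × V × V),
        (∀ p ∈ F', IsPCPath G c [p.1, p.2.1, p.2.2.1, p.2.2.2]) ∧
        (∀ p ∈ F', ∀ q ∈ F', p ≠ q →
          ∀ v ∈ [p.1, p.2.1, p.2.2.1, p.2.2.2], v ∉ ([q.1, q.2.1, q.2.2.1, q.2.2.2] : List V)) ∧
        (F'.card : ℝ) ≤ γ * (Fintype.card V : ℝ) / 64 ∧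
        (∀ x : V,
          γ ^ 2 * (Fintype.card V : ℝ) / 512 ≤ ((F' : Set (V × V × V × V)) ∩ Labs G c x).ncard) ∧
        (∀ x₁ x₂ y₁ y₂ : V, ([x₁, x₂, y₁, y₂] : List V).Nodup →
          G.Adj x₁ x₂ → G.Adj y₁ y₂ →
          γ ^ 2 * (Fintype.card V : ℝ) / 512 ≤
            ((F' : Set (V × V × V × V)) ∩ LabsE G c x₁ x₂ y₁ y₂).ncard) := by
  classical
  -- a numeric threshold from exponential decay
  have ha0 : (0 : ℝ) < γ ^ 2 / 256 := by positivity
  have htend := Real.tendsto_pow_mul_exp_neg_atTop_nhds_zero 4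
  have hmul : Filter.Tendsto (fun x : ℝ => γ ^ 2 / 256 * x) Filter.atTop Filter.atTop :=
    Filter.Tendsto.const_mul_atTop ha0 Filter.tendsto_id
  have hcomp := htend.comp hmul
  have hev := Filter.Tendsto.eventually_lt_const
    (show (0 : ℝ) < (γ ^ 2 / 256) ^ 4 / (2 * Real.exp 1) by positivity) hcomp
  rw [Filter.eventually_atTop] at hev
  obtain ⟨x₀, hx₀⟩ := hev
  refine ⟨max 1 ⌈x₀⌉₊, ?_⟩
  intro V _ G c _hsym hn hL hLE
  have hn1 : 1 ≤ Fintype.card V := le_trans (le_max_left _ _) hn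
  have hnx : x₀ ≤ (Fintype.card V : ℝ) := by
    have h1 : ⌈x₀⌉₊ ≤ Fintype.card V := le_trans (le_max_right _ _) hn
    exact le_trans (Nat.le_ceil x₀) (by exact_mod_cast h1)
  have hn0 : (0 : ℝ) ≤ (Fintype.card V : ℝ) := Nat.cast_nonneg _
  have hn1' : (1 : ℝ) ≤ (Fintype.card V : ℝ) := by exact_mod_cast hn1
  -- the key numeric fact at n
  have hx := hx₀ _ hnx
  have hkeynum : 2 * Real.exp 1 *
      ((Fintype.card V : ℝ) ^ 4 * Real.exp (-(γ ^ 2 / 256 * (Fintype.card V : ℝ)))) < 1 := by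
    simp only [Function.comp] at hx
    have h1 : (γ ^ 2 / 256 * (Fintype.card V : ℝ)) ^ 4 *
        Real.exp (-(γ ^ 2 / 256 * (Fintype.card V : ℝ))) <
        (γ ^ 2 / 256) ^ 4 / (2 * Real.exp 1) := by
      simpa using hx
    have hE : (0 : ℝ) < Real.exp (-(γ ^ 2 / 256 * (Fintype.card V : ℝ))) := Real.exp_pos _
    have he : (0 : ℝ) < Real.exp 1 := Real.exp_pos _
    have h2 : (γ ^ 2 / 256 * (Fintype.card V : ℝ)) ^ 4 =
        (γ ^ 2 / 256) ^ 4 * (Fintype.card V : ℝ) ^ 4 := by ring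
    rw [h2] at h1
    have ha4 : (0 : ℝ) < (γ ^ 2 / 256) ^ 4 := by positivity
    rw [div_eq_mul_inv, mul_assoc] at h1
    have h3 := (mul_lt_mul_iff_right₀ ha4).mp h1
    -- h3 : n^4 * E < (2 * exp 1)⁻¹
    have h4 : (0 : ℝ) < 2 * Real.exp 1 := by positivity
    calc 2 * Real.exp 1 *
        ((Fintype.card V : ℝ) ^ 4 * Real.exp (-(γ ^ 2 / 256 * (Fintype.card V : ℝ)))) <
        2 * Real.exp 1 * (2 * Real.exp 1)⁻¹ := by
          exact (mul_lt_mul_iff_right₀ h4).mpr h3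
      _ = 1 := mul_inv_cancel₀ (ne_of_gt h4)
  -- set up the greedy family
  set s : ℕ := ⌊γ * (Fintype.card V : ℝ) / 64⌋₊ with hsdef
  have hs_le : (s : ℝ) ≤ γ * (Fintype.card V : ℝ) / 64 := Nat.floor_le (by positivity)
  have hs_ge : γ * (Fintype.card V : ℝ) / 64 - 1 ≤ (s : ℝ) := by
    have := Nat.lt_floor_add_one (γ * (Fintype.card V : ℝ) / 64)
    rw [← hsdef] at this
    linarith
  have hLE' : ∀ w ∈ Stmt17.quadIdx G,
      γ * (Fintype.card V : ℝ) ^ 4 ≤ ((LabsE G c w.1 w.2.1 w.2.2.1 w.2.2.2).ncard : ℝ) := by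
    intro w hw
    rw [Stmt17.quadIdx, Finset.mem_filter] at hw
    obtain ⟨-, hnd, ha1, ha2⟩ := hw
    exact hLE w.1 w.2.1 w.2.2.1 w.2.2.2 hnd ha1 ha2
  obtain ⟨F, hFc, hFpc, hFd, hFφ⟩ :=
    Stmt17.main_ind G c γ hγ0 hγ1 hL hLE' hn1 s hs_le s le_rfl
  -- numeric comparison of potentials
  have he2 : Real.exp (-1 : ℝ) ≤ 1 := by
    rw [show (1 : ℝ) = Real.exp 0 from (Real.exp_zero).symm]
    exact Real.exp_le_exp.mpr (by norm_num)
  have he1 : (0 : ℝ) < Real.exp (-1) := Real.exp_pos _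
  have hehalf : Real.exp (-1 : ℝ) ≤ 1 / 2 := by
    rw [Real.exp_neg]
    have h2 : (2 : ℝ) ≤ Real.exp 1 := by nlinarith [Real.exp_one_gt_d9]
    have := inv_anti₀ (by norm_num : (0:ℝ) < 2) h2
    linarith [this]
  have hc_nonneg : 0 ≤ 3 * γ / 4 * (1 - Real.exp (-1)) := by nlinarith
  have hc_le1 : 3 * γ / 4 * (1 - Real.exp (-1)) ≤ 1 := by nlinarith
  have hc_lb : 3 * γ / 8 ≤ 3 * γ / 4 * (1 - Real.exp (-1)) := by nlinarith
  have hnum : ((Fintype.card V : ℝ) + (Fintype.card V : ℝ) ^ 4) *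
      (1 - 3 * γ / 4 * (1 - Real.exp (-1))) ^ s <
      Real.exp (-(γ ^ 2 * (Fintype.card V : ℝ) / 512)) := by
    set cγ := 3 * γ / 4 * (1 - Real.exp (-1)) with hcγ
    have hpow : (1 - cγ) ^ s ≤ Real.exp (-(cγ * s)) := by
      have h1 : (1 - cγ) ≤ Real.exp (-cγ) := by
        have := Real.add_one_le_exp (-cγ)
        linarith
      calc (1 - cγ) ^ s ≤ (Real.exp (-cγ)) ^ s := pow_le_pow_left₀ (by linarith) h1 s
        _ = Real.exp (-(cγ * s)) := by
            rw [← Real.exp_nat_mul]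
            congr 1
            ring
    have hM : (Fintype.card V : ℝ) + (Fintype.card V : ℝ) ^ 4 ≤
        2 * (Fintype.card V : ℝ) ^ 4 := by
      have h14 : (Fintype.card V : ℝ) ^ 1 ≤ (Fintype.card V : ℝ) ^ 4 :=
        pow_le_pow_right₀ hn1' (by norm_num)
      rw [pow_one] at h14
      linarith
    have h2 : Real.exp (-(cγ * s)) ≤
        Real.exp 1 * Real.exp (-(cγ * (γ * (Fintype.card V : ℝ) / 64))) := by
      rw [← Real.exp_add]
      apply Real.exp_le_exp.mpr
      nlinarith [mul_le_mul_of_nonneg_left hs_ge hc_nonneg]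
    have h3 : Real.exp (-(cγ * (γ * (Fintype.card V : ℝ) / 64))) ≤
        Real.exp (-(3 * γ ^ 2 * (Fintype.card V : ℝ) / 512)) := by
      apply Real.exp_le_exp.mpr
      nlinarith [mul_le_mul_of_nonneg_right hc_lb (by positivity : (0:ℝ) ≤ γ * (Fintype.card V : ℝ) / 64)]
    have h4 : Real.exp (-(3 * γ ^ 2 * (Fintype.card V : ℝ) / 512)) =
        Real.exp (-(γ ^ 2 / 256 * (Fintype.card V : ℝ))) *
          Real.exp (-(γ ^ 2 * (Fintype.card V : ℝ) / 512)) := by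
      rw [← Real.exp_add]
      congr 1
      ring
    have hpow0 : (0 : ℝ) ≤ (1 - cγ) ^ s := pow_nonneg (by linarith) s
    have hEfin : (0 : ℝ) < Real.exp (-(γ ^ 2 * (Fintype.card V : ℝ) / 512)) := Real.exp_pos _
    calc ((Fintype.card V : ℝ) + (Fintype.card V : ℝ) ^ 4) * (1 - cγ) ^ s
        ≤ 2 * (Fintype.card V : ℝ) ^ 4 * (1 - cγ) ^ s :=
          mul_le_mul_of_nonneg_right hM hpow0
      _ ≤ 2 * (Fintype.card V : ℝ) ^ 4 * Real.exp (-(cγ * s)) := by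
          apply mul_le_mul_of_nonneg_left hpow
          positivity
      _ ≤ 2 * (Fintype.card V : ℝ) ^ 4 *
          (Real.exp 1 * Real.exp (-(cγ * (γ * (Fintype.card V : ℝ) / 64)))) := by
          apply mul_le_mul_of_nonneg_left h2
          positivity
      _ ≤ 2 * (Fintype.card V : ℝ) ^ 4 *
          (Real.exp 1 * Real.exp (-(3 * γ ^ 2 * (Fintype.card V : ℝ) / 512))) := by
          apply mul_le_mul_of_nonneg_left _ (by positivity)
          exact mul_le_mul_of_nonneg_left h3 (Real.exp_pos 1).le
      _ = (2 * Real.exp 1 *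
            ((Fintype.card V : ℝ) ^ 4 * Real.exp (-(γ ^ 2 / 256 * (Fintype.card V : ℝ))))) *
          Real.exp (-(γ ^ 2 * (Fintype.card V : ℝ) / 512)) := by
          rw [h4]; ring
      _ < 1 * Real.exp (-(γ ^ 2 * (Fintype.card V : ℝ) / 512)) :=
          mul_lt_mul_of_pos_right hkeynum hEfin
      _ = Real.exp (-(γ ^ 2 * (Fintype.card V : ℝ) / 512)) := one_mul _
  have hφlt : Stmt17.phi G c F < Real.exp (-(γ ^ 2 * (Fintype.card V : ℝ) / 512)) :=
    lt_of_le_of_lt hFφ hnum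
  refine ⟨F, hFpc, hFd, ?_, ?_, ?_⟩
  · calc (F.card : ℝ) ≤ (s : ℝ) := by exact_mod_cast hFc
      _ ≤ γ * (Fintype.card V : ℝ) / 64 := hs_le
  · intro x
    have hterm : Real.exp (-(Stmt17.cnt F (Labs G c x) : ℝ)) ≤ Stmt17.phi G c F := by
      unfold Stmt17.phi
      have h1 : Real.exp (-(Stmt17.cnt F (Labs G c x) : ℝ)) ≤
          ∑ y : V, Real.exp (-(Stmt17.cnt F (Labs G c y) : ℝ)) :=
        Finset.single_le_sum (f := fun y : V => Real.exp (-(Stmt17.cnt F (Labs G c y) : ℝ)))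
          (fun y _ => (Real.exp_pos _).le) (Finset.mem_univ x)
      have h2 : (0 : ℝ) ≤ ∑ w ∈ Stmt17.quadIdx G,
          Real.exp (-(Stmt17.cnt F (LabsE G c w.1 w.2.1 w.2.2.1 w.2.2.2) : ℝ)) :=
        Finset.sum_nonneg (fun w _ => (Real.exp_pos _).le)
      linarith
    have hlt := lt_of_le_of_lt hterm hφlt
    have h3 : γ ^ 2 * (Fintype.card V : ℝ) / 512 < (Stmt17.cnt F (Labs G c x) : ℝ) := by
      have := Real.exp_lt_exp.mp hlt
      linarith
    rw [Stmt17.cnt_eq_ncard]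
    linarith
  · intro x₁ x₂ y₁ y₂ hnd ha1 ha2
    have hw : ((x₁, x₂, y₁, y₂) : V × V × V × V) ∈ Stmt17.quadIdx G := by
      rw [Stmt17.quadIdx, Finset.mem_filter]
      exact ⟨Finset.mem_univ _, hnd, ha1, ha2⟩
    have hterm : Real.exp (-(Stmt17.cnt F (LabsE G c x₁ x₂ y₁ y₂) : ℝ)) ≤
        Stmt17.phi G c F := by
      unfold Stmt17.phi
      have h1 := Finset.single_le_sum (f := fun w : V × V × V × V =>
            Real.exp (-(Stmt17.cnt F (LabsE G c w.1 w.2.1 w.2.2.1 w.2.2.2) : ℝ)))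
          (fun w _ => (Real.exp_pos _).le) hw
      dsimp only at h1
      have h2 : (0 : ℝ) ≤ ∑ y : V, Real.exp (-(Stmt17.cnt F (Labs G c y) : ℝ)) :=
        Finset.sum_nonneg (fun y _ => (Real.exp_pos _).le)
      linarith
    have hlt := lt_of_le_of_lt hterm hφlt
    have h3 : γ ^ 2 * (Fintype.card V : ℝ) / 512 <
        (Stmt17.cnt F (LabsE G c x₁ x₂ y₁ y₂) : ℝ) := by
      have := Real.exp_lt_exp.mp hlt
      linarith
    rw [Stmt17.cnt_eq_ncard]
    linarith
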